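/- Let G be a locally finite connected graph with minimum degree at least k, and suppose there are finitely many pairwise disjoint regions C₁,…,C_n of G such that every end of G lives in some C_i, each C_i satisfies δ⁺_G(C_i) ≥ k (every boundary vertex of C_i has degree at least k in G[N(C_i), C_i]), and some vertex v of G lies in none of the C_i. Then G has a finite nonempty subgraph of minimum degree at least k. -/

import Mathlib

open SimpleGraph Set

universe u
variable {V : Type u}

/-- A graph is locally finite if every vertex has finite neighbourhood. -/
def LocFin (G : SimpleGraph V) : Prop := ∀ v, (G.neighborSet v).Finite

/-- The vertex boundary `V⁺(U)`: vertices of `U` with a neighbour outside `U`. -/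
def vBdry (G : SimpleGraph V) (U : Set V) : Set V :=
  {v | v ∈ U ∧ ∃ w, w ∉ U ∧ G.Adj v w}

/-- The neighbourhood `N(U)` of a vertex set `U`: vertices outside `U` adjacent to `U`. -/
def nbhd (G : SimpleGraph V) (U : Set V) : Set V :=
  {w | w ∉ U ∧ ∃ v ∈ U, G.Adj v w}

/-- Degree of `v` in the subgraph of `G` induced on the vertex set `A`. -/
noncomputable def degIn (G : SimpleGraph V) (A : Set V) (v : V) : ℕ :=
  (A ∩ G.neighborSet v).ncard

/-- `C` is (the vertex set of) a component of `G - S`. -/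
def IsCompOf (G : SimpleGraph V) (S C : Set V) : Prop :=
  C.Nonempty ∧ C ∩ S = ∅ ∧ (G.induce C).Connected ∧
    ∀ v ∈ C, ∀ w, w ∉ S → G.Adj v w → w ∈ C

/-- A region of `G`: a (nonempty) connected induced subgraph with finite vertex boundary. -/
def IsRegion (G : SimpleGraph V) (C : Set V) : Prop :=
  (G.induce C).Connected ∧ (vBdry G C).Finite

/-- `δ⁺_G(C) ≥ k`: every boundary vertex of `C` has degree at least `k`
in the graph `G[S, C]` induced on `N(C) ∪ V⁺(C)`. -/
def minOutDegGE (G : SimpleGraph V) (C : Set V) (k : ℕ) : Prop :=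
  ∀ v ∈ vBdry G C, k ≤ degIn G (nbhd G C ∪ vBdry G C) v

/-- `f : ℕ → V` is a ray (one-way infinite path) in `G`. -/
def IsRay (G : SimpleGraph V) (f : ℕ → V) : Prop :=
  Function.Injective f ∧ ∀ n, G.Adj (f n) (f (n + 1))

/-- The ray `f` has a tail inside the vertex set `C`. -/
def HasTailIn (f : ℕ → V) (C : Set V) : Prop := ∃ N, ∀ n, N ≤ n → f n ∈ C

/-- Two rays are equivalent (belong to the same end) iff no finite vertex set
separates them: for every finite `S` they have tails in a common component of `G - S`. -/
def RayEquiv (G : SimpleGraph V) (f g : ℕ → V) : Prop :=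
  ∀ S : Set V, S.Finite → ∃ C, IsCompOf G S C ∧ HasTailIn f C ∧ HasTailIn g C


lemma getVert_mem_support' {G : SimpleGraph V} {u v : V} (p : G.Walk u v) (i : ℕ) :
    p.getVert i ∈ p.support := by
  induction p generalizing i with
  | nil => simp [Walk.getVert]
  | cons h q ih =>
    cases i with
    | zero => simp [Walk.getVert]
    | succ i => simp only [Walk.getVert, Walk.support_cons, List.mem_cons]; right; exact ih i

lemma walk_len_pos {G : SimpleGraph V} {u v : V} (p : G.Walk u v) (h : u ≠ v) :
    1 ≤ p.length := by
  cases p with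
  | nil => exact absurd rfl h
  | cons h q => simp [Walk.length_cons]

/-- Vertices reachable from `x` by walks avoiding `A`. -/
def RSet (G : SimpleGraph V) (A : Set V) (x : V) : Set V :=
  {w | ∃ p : G.Walk x w, ∀ u ∈ p.support, u ∉ A}

lemma last_exit {G : SimpleGraph V} (A : Set V) :
    ∀ (L : ℕ) (x w : V) (p : G.Walk x w), p.length ≤ L → (∀ u ∈ p.support, u ∉ A) →
      w ≠ x → ∃ (y : V) (q : G.Walk y w), G.Adj x y ∧ x ∉ q.support ∧
        ∀ u ∈ q.support, u ∉ A := by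
  classical
  intro L
  induction L with
  | zero =>
    intro x w p hl hA hne
    cases p with
    | nil => exact absurd rfl hne
    | cons h q => simp [Walk.length_cons] at hl
  | succ L ih =>
    intro x w p hl hA hne
    cases p with
    | nil => exact absurd rfl hne
    | @cons _ c _ h q =>
      by_cases hx : x ∈ q.support
      · refine ih x w (q.dropUntil x hx) ?_ ?_ hne
        · calc (q.dropUntil x hx).length ≤ q.length := Walk.length_dropUntil_le q hx
            _ ≤ L := by simpa [Walk.length_cons] using hl
        · intro u hu
          refine hA u ?_
          simp only [Walk.support_cons, List.mem_cons]
          exact Or.inr (Walk.support_dropUntil_subset q hx hu)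
      · refine ⟨c, q, h, hx, fun u hu => hA u ?_⟩
        simp only [Walk.support_cons, List.mem_cons]
        exact Or.inr hu

lemma konig_step {G : SimpleGraph V} (hG : ∀ x, (G.neighborSet x).Finite)
    {A : Set V} {x : V} (hx : x ∉ A) (hinf : (RSet G A x).Infinite) :
    ∃ y, G.Adj x y ∧ y ∉ insert x A ∧ (RSet G (insert x A) y).Infinite := by
  classical
  by_contra hcon
  push_neg at hcon
  have hsub : RSet G A x ⊆ {x} ∪ ⋃ y ∈ (G.neighborSet x \ A : Set V), RSet G (insert x A) y := by
    intro w hw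
    rcases hw with ⟨p, hp⟩
    by_cases hwx : w = x
    · exact Or.inl hwx
    · obtain ⟨y, q, hadj, hxq, hqA⟩ := last_exit A p.length x w p le_rfl hp hwx
      have hyA : y ∉ A := hqA y q.start_mem_support
      have hq' : ∀ u ∈ q.support, u ∉ insert x A := by
        intro u hu hmem
        rcases hmem with rfl | hmem
        · exact hxq hu
        · exact hqA u hu hmem
      exact Or.inr (Set.mem_biUnion (show y ∈ G.neighborSet x \ A from ⟨hadj, hyA⟩) ⟨q, hq'⟩)
  have hfin : ({x} ∪ ⋃ y ∈ (G.neighborSet x \ A : Set V), RSet G (insert x A) y).Finite := by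
    refine (Set.finite_singleton x).union (Set.Finite.biUnion ((hG x).diff : (G.neighborSet x \ A).Finite) ?_)
    intro y hy
    rcases hy with ⟨hadj, hyA⟩
    have hyx : y ∉ insert x A := by
      simp only [Set.mem_insert_iff, not_or]
      exact ⟨fun h => G.ne_of_adj hadj h.symm, hyA⟩
    exact hcon y hadj hyx
  exact hinf (hfin.subset hsub)

/-- König's lemma: a locally finite graph with infinitely many vertices reachable
from `v` contains a ray. -/
lemma exists_ray {G : SimpleGraph V} (hG : ∀ x, (G.neighborSet x).Finite)
    {v : V} (hinf : (RSet G ∅ v).Infinite) :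
    ∃ f : ℕ → V, (∀ n, G.Adj (f n) (f (n + 1))) ∧ Function.Injective f := by
  classical
  let T := {p : V × Set V // p.1 ∉ p.2 ∧ (RSet G p.2 p.1).Infinite}
  have step : ∀ p : T, ∃ y, G.Adj p.1.1 y ∧ y ∉ insert p.1.1 p.1.2 ∧
      (RSet G (insert p.1.1 p.1.2) y).Infinite := fun p => konig_step hG p.2.1 p.2.2
  let nxt : T → T := fun p => ⟨((step p).choose, insert p.1.1 p.1.2),
    (step p).choose_spec.2.1, (step p).choose_spec.2.2⟩
  let seq : ℕ → T := fun m => nxt^[m] ⟨(v, ∅), Set.notMem_empty v, hinf⟩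
  have hseq : ∀ m, seq (m+1) = nxt (seq m) := by
    intro m; simp only [seq, Function.iterate_succ_apply']
  let f : ℕ → V := fun m => (seq m).1.1
  have hadj : ∀ m, G.Adj (f m) (f (m+1)) := by
    intro m
    have : f (m+1) = (step (seq m)).choose := by
      show ((seq (m+1)).1).1 = _
      rw [hseq m]
    rw [this]; exact (step (seq m)).choose_spec.1
  have hAsucc : ∀ m, (seq (m+1)).1.2 = insert (f m) ((seq m)).1.2 := by
    intro m; rw [hseq m]
  have hmem : ∀ m l, m < l → f m ∈ (seq l).1.2 := by
    intro m l
    induction l with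
    | zero => omega
    | succ l ih =>
      intro hml
      rw [hAsucc l]
      rcases Nat.lt_succ_iff_lt_or_eq.mp hml with h | h
      · exact Set.mem_insert_iff.mpr (Or.inr (ih h))
      · subst h; exact Set.mem_insert _ _
  refine ⟨f, hadj, ?_⟩
  intro a b hab
  by_contra hne
  rcases Nat.lt_or_ge a b with h | h
  · have := hmem a b h; rw [hab] at this; exact (seq b).2.1 this
  · have := hmem b a (by omega); rw [← hab] at this; exact (seq a).2.1 this

/-- last occurrence index of the value `g m`. -/
noncomputable def nextS (g : ℕ → V) (m : ℕ) : ℕ := sSup {j | g j = g m}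

lemma loop_erase {G : SimpleGraph V} {g : ℕ → V}
    (hadj : ∀ m, G.Adj (g m) (g (m+1))) (hfin : ∀ u, {m | g m = u}.Finite) :
    ∃ (r : ℕ → V) (s : ℕ → ℕ), IsRay G r ∧ StrictMono s ∧ ∀ k, r k = g (s k) := by
  classical
  have hbdd : ∀ m, BddAbove {j | g j = g m} := fun m => (hfin (g m)).bddAbove
  have hne : ∀ m, m ∈ {j | g j = g m} := fun m => rfl
  have hval : ∀ m, g (nextS g m) = g m := fun m => Nat.sSup_mem ⟨m, hne m⟩ (hbdd m)
  have hle : ∀ m, m ≤ nextS g m := fun m => le_csSup (hbdd m) (hne m)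
  have hmax : ∀ m j, g j = g m → j ≤ nextS g m := fun m j hj => le_csSup (hbdd m) hj
  have hidem : ∀ m, nextS g (nextS g m) = nextS g m := by
    intro m
    have : {j | g j = g (nextS g m)} = {j | g j = g m} := by
      ext j; simp [hval m]
    exact congrArg sSup this
  let s : ℕ → ℕ := fun k => Nat.rec (nextS g 0) (fun _ sk => nextS g (sk + 1)) k
  have hs_succ : ∀ k, s (k+1) = nextS g (s k + 1) := fun k => rfl
  have hfix : ∀ k, nextS g (s k) = s k := by
    intro k
    cases k with
    | zero => exact hidem 0
    | succ k => exact hidem _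
  have hmono : StrictMono s := by
    apply strictMono_nat_of_lt_succ
    intro k
    have := hle (s k + 1)
    rw [hs_succ k] at *
    omega
  refine ⟨fun k => g (s k), s, ⟨?_, ?_⟩, hmono, fun k => rfl⟩
  · intro a b hab
    by_contra hne'
    wlog h : a < b generalizing a b
    · exact this hab.symm (Ne.symm hne') (by omega)
    · have h1 : s b ≤ nextS g (s a) := hmax (s a) (s b) hab.symm
      rw [hfix a] at h1
      exact absurd (hmono h) (by omega)
  · intro k
    have h2 : g (s (k+1)) = g (s k + 1) := by rw [hs_succ k]; exact hval (s k + 1)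
    show G.Adj (g (s k)) (g (s (k+1)))
    rw [h2]
    exact hadj (s k)


def Tsum (len : ℕ → ℕ) : ℕ → ℕ
  | 0 => 0
  | m+1 => Tsum len m + len m

def idxOf (len : ℕ → ℕ) (n : ℕ) : ℕ := Nat.findGreatest (fun m => Tsum len m ≤ n) n

lemma Tsum_ge {len : ℕ → ℕ} (hlen : ∀ m, 1 ≤ len m) (m : ℕ) : m ≤ Tsum len m := by
  induction m with
  | zero => omega
  | succ m ih => have := hlen m; simp only [Tsum]; omega

lemma Tsum_mono {len : ℕ → ℕ} {a b : ℕ} (hab : a ≤ b) : Tsum len a ≤ Tsum len b := by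
  induction b with
  | zero => simp_all
  | succ b ih =>
    rcases Nat.le_succ_iff.mp hab with h | h
    · have := ih h; simp only [Tsum]; omega
    · exact le_of_eq (by rw [h])

lemma Tsum_le_idx {len : ℕ → ℕ} (n : ℕ) : Tsum len (idxOf len n) ≤ n := by
  unfold idxOf
  exact Nat.findGreatest_spec (P := fun m => Tsum len m ≤ n) (Nat.zero_le n)
    (show Tsum len 0 ≤ n from Nat.zero_le n)

lemma lt_Tsum_idx_succ {len : ℕ → ℕ} (hlen : ∀ m, 1 ≤ len m) (n : ℕ) :
    n < Tsum len (idxOf len n + 1) := by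
  by_contra h
  push_neg at h
  have h1 : idxOf len n + 1 ≤ n := le_trans (Tsum_ge hlen _) h
  have h2 := Nat.le_findGreatest (P := fun m => Tsum len m ≤ n) h1 h
  have : Nat.findGreatest (fun m => Tsum len m ≤ n) n = idxOf len n := rfl
  omega

lemma idx_eq {len : ℕ → ℕ} (hlen : ∀ m, 1 ≤ len m) (m n : ℕ)
    (h1 : Tsum len m ≤ n) (h2 : n < Tsum len (m+1)) : idxOf len n = m := by
  have hub : idxOf len n ≤ m := by
    by_contra hc
    push_neg at hc
    have : Tsum len (m+1) ≤ Tsum len (idxOf len n) := Tsum_mono hc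
    have := Tsum_le_idx (len := len) n
    omega
  have hlb : m ≤ idxOf len n :=
    Nat.le_findGreatest (P := fun m => Tsum len m ≤ n) (le_trans (Tsum_ge hlen m) h1) h1
  omega

lemma idx_fiber_finite {len : ℕ → ℕ} (hlen : ∀ m, 1 ≤ len m) {M : Set ℕ} (hM : M.Finite) :
    {n | idxOf len n ∈ M}.Finite := by
  have : {n | idxOf len n ∈ M} ⊆ ⋃ m ∈ M, Set.Ico (Tsum len m) (Tsum len (m+1)) := by
    intro n hn
    exact Set.mem_biUnion hn ⟨Tsum_le_idx n, lt_Tsum_idx_succ hlen n⟩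
  exact (hM.biUnion (fun m _ => Set.finite_Ico _ _)).subset this

variable {G : SimpleGraph V}

/-- lengths of a composable sequence of walks. -/
def lenOf {f : ℕ → V} (p : ∀ m, G.Walk (f m) (f (m+1))) : ℕ → ℕ := fun m => (p m).length

/-- Concatenation of a sequence of composable walks into an infinite walk. -/
noncomputable def gseq (f : ℕ → V) (p : ∀ m, G.Walk (f m) (f (m+1))) (n : ℕ) : V :=
  (p (idxOf (lenOf p) n)).getVert (n - Tsum (lenOf p) (idxOf (lenOf p) n))

lemma getVert_mem_support'' {u v : V} (p : G.Walk u v) (i : ℕ) :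
    p.getVert i ∈ p.support := by
  induction p generalizing i with
  | nil => simp [Walk.getVert]
  | cons h q ih =>
    cases i with
    | zero => simp [Walk.getVert]
    | succ i => simp only [Walk.getVert, Walk.support_cons, List.mem_cons]; right; exact ih i

lemma gseq_mem_support (f : ℕ → V) (p : ∀ m, G.Walk (f m) (f (m+1))) (n : ℕ) :
    gseq f p n ∈ (p (idxOf (lenOf p) n)).support :=
  getVert_mem_support'' _ _

lemma gseq_adj (f : ℕ → V) (p : ∀ m, G.Walk (f m) (f (m+1)))
    (hlen : ∀ m, 1 ≤ lenOf p m) (n : ℕ) :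
    G.Adj (gseq f p n) (gseq f p (n+1)) := by
  have h1 : Tsum (lenOf p) (idxOf (lenOf p) n) ≤ n := Tsum_le_idx n
  have h2 : n < Tsum (lenOf p) (idxOf (lenOf p) n + 1) := lt_Tsum_idx_succ hlen n
  set m := idxOf (lenOf p) n with hm
  have hTm1 : Tsum (lenOf p) (m+1) = Tsum (lenOf p) m + lenOf p m := rfl
  have hj : n - Tsum (lenOf p) m < lenOf p m := by omega
  have hadj := (p m).adj_getVert_succ (show n - Tsum (lenOf p) m < (p m).length from hj)
  have hgn : gseq f p n = (p m).getVert (n - Tsum (lenOf p) m) := rfl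
  by_cases hb : n + 1 < Tsum (lenOf p) (m+1)
  · have hidx : idxOf (lenOf p) (n+1) = m := idx_eq hlen m (n+1) (by omega) hb
    have hh : gseq f p (n+1) = (p m).getVert (n + 1 - Tsum (lenOf p) m) := by
      unfold gseq
      rw [hidx]
    rw [hgn, hh, show n + 1 - Tsum (lenOf p) m = (n - Tsum (lenOf p) m) + 1 by omega]
    exact hadj
  · have hb' : n + 1 = Tsum (lenOf p) (m+1) := by omega
    have hidx : idxOf (lenOf p) (n+1) = m + 1 := by
      refine idx_eq hlen (m+1) (n+1) (by omega) ?_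
      have e : Tsum (lenOf p) (m+1+1) = Tsum (lenOf p) (m+1) + lenOf p (m+1) := rfl
      have := hlen (m+1)
      omega
    have hg1 : gseq f p (n+1) = (p (m+1)).getVert 0 := by
      unfold gseq
      rw [hidx, show n + 1 - Tsum (lenOf p) (m+1) = 0 by omega]
    have hg2 : (p (m+1)).getVert 0 = f (m+1) := Walk.getVert_zero _
    have hg3 : (p m).getVert (lenOf p m) = f (m+1) := Walk.getVert_length _
    have hjj : n - Tsum (lenOf p) m + 1 = lenOf p m := by omega
    rw [hgn, hg1, hg2]
    have hh := hadj
    rw [hjj, hg3] at hh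
    exact hh


variable {n : ℕ}

def accSet (G : SimpleGraph V) (C : Fin n → Set V) (i : Fin n) : Set V :=
  nbhd G (C i) ∪ vBdry G (C i)

def Wset (G : SimpleGraph V) (C : Fin n → Set V) : Set V :=
  (⋃ i, C i)ᶜ ∪ ⋃ i, vBdry G (C i)

/-- Auxiliary graph on `Wset`: real edges plus shortcuts through the regions. -/
def Gp (G : SimpleGraph V) (C : Fin n → Set V) : SimpleGraph V where
  Adj x y := x ≠ y ∧ x ∈ Wset G C ∧ y ∈ Wset G C ∧
    (G.Adj x y ∨ ∃ i, x ∈ accSet G C i ∧ y ∈ accSet G C i)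
  symm := by
    constructor
    rintro x y ⟨h1, h2, h3, h4⟩
    refine ⟨h1.symm, h3, h2, ?_⟩
    rcases h4 with h | ⟨i, ha, hb⟩
    · exact Or.inl h.symm
    · exact Or.inr ⟨i, hb, ha⟩
  loopless := ⟨fun x h => h.1 rfl⟩

section lemmas
variable {G : SimpleGraph V} {C : Fin n → Set V}

lemma accSet_finite (hG : ∀ v, (G.neighborSet v).Finite) (hreg : ∀ i, IsRegion G (C i))
    (i : Fin n) : (accSet G C i).Finite := by
  have h1 : nbhd G (C i) ⊆ ⋃ b ∈ vBdry G (C i), G.neighborSet b := by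
    rintro w ⟨hw, u, hu, huw⟩
    exact Set.mem_biUnion ⟨hu, w, hw, huw⟩ huw
  exact ((((hreg i).2).biUnion (fun b _ => hG b)).subset h1).union (hreg i).2

lemma Gp_locfin (hG : ∀ v, (G.neighborSet v).Finite) (hreg : ∀ i, IsRegion G (C i))
    (x : V) : ((Gp G C).neighborSet x).Finite := by
  have hsub : (Gp G C).neighborSet x ⊆ G.neighborSet x ∪ ⋃ i, accSet G C i := by
    rintro y ⟨_, _, _, h | ⟨i, _, hy⟩⟩
    · exact Or.inl h
    · exact Or.inr (Set.mem_iUnion.mpr ⟨i, hy⟩)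
  exact ((hG x).union (Set.finite_iUnion (accSet_finite hG hreg))).subset hsub

lemma mem_vBdry_of_W (hdisj : ∀ i j, i ≠ j → C i ∩ C j = ∅) {i : Fin n} {x : V}
    (hxW : x ∈ Wset G C) (hxC : x ∈ C i) : x ∈ vBdry G (C i) := by
  rcases hxW with hx | hx
  · exact absurd (Set.mem_iUnion.mpr ⟨i, hxC⟩) hx
  · rcases Set.mem_iUnion.mp hx with ⟨j, hj⟩
    rcases eq_or_ne j i with rfl | hne
    · exact hj
    · have := hdisj j i hne
      exact absurd (Set.mem_inter hj.1 hxC) (by rw [this]; exact Set.notMem_empty x)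

lemma interior_adj {i : Fin n} {b c : V} (hb : b ∈ C i) (hnb : b ∉ vBdry G (C i))
    (hadj : G.Adj b c) : c ∈ C i := by
  by_contra hc
  exact hnb ⟨hb, c, hc, hadj⟩

lemma not_mem_W {c : V} (hc : c ∉ Wset G C) :
    ∃ i, c ∈ C i ∧ c ∉ vBdry G (C i) := by
  unfold Wset at hc
  simp only [Set.mem_union, not_or] at hc
  obtain ⟨h1, h2⟩ := hc
  rcases Set.mem_iUnion.mp (Set.notMem_compl_iff.mp h1) with ⟨i, hi⟩
  exact ⟨i, hi, fun hb => h2 (Set.mem_iUnion.mpr ⟨i, hb⟩)⟩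

lemma reach_Gp (hdisj : ∀ i j, i ≠ j → C i ∩ C j = ∅) :
    ∀ (L : ℕ) (b w : V) (q : G.Walk b w), q.length ≤ L → w ∈ Wset G C →
      (b ∈ Wset G C → (Gp G C).Reachable b w) ∧
      (∀ i, b ∈ C i → b ∉ vBdry G (C i) →
        ∃ y, y ∈ accSet G C i ∧ y ∈ Wset G C ∧ (Gp G C).Reachable y w) := by
  intro L
  induction L with
  | zero =>
    intro b w q hl hw
    cases q with
    | nil =>
      refine ⟨fun hb => Reachable.refl b, fun i hb hnb => ?_⟩
      exact absurd (mem_vBdry_of_W hdisj hw hb) hnb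
    | cons h q => simp [Walk.length_cons] at hl
  | succ L ih =>
    intro b w q hl hw
    cases q with
    | nil =>
      refine ⟨fun hb => Reachable.refl b, fun i hb hnb => ?_⟩
      exact absurd (mem_vBdry_of_W hdisj hw hb) hnb
    | @cons _ c _ hbc q =>
      have hql : q.length ≤ L := by simpa [Walk.length_cons] using hl
      constructor
      · intro hbW
        by_cases hcW : c ∈ Wset G C
        · have hreach := (ih c w q hql hw).1 hcW
          exact Reachable.trans ⟨Walk.cons ⟨G.ne_of_adj hbc, hbW, hcW, Or.inl hbc⟩ Walk.nil⟩ hreach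
        · obtain ⟨i, hci, hcb⟩ := not_mem_W hcW
          obtain ⟨y, hyacc, hyW, hyreach⟩ := (ih c w q hql hw).2 i hci hcb
          have hbacc : b ∈ accSet G C i := by
            by_cases hbCi : b ∈ C i
            · exact Or.inr (mem_vBdry_of_W hdisj hbW hbCi)
            · exact Or.inl ⟨hbCi, c, hci, hbc.symm⟩
          rcases eq_or_ne b y with rfl | hne
          · exact hyreach
          · exact Reachable.trans ⟨Walk.cons ⟨hne, hbW, hyW, Or.inr ⟨i, hbacc, hyacc⟩⟩ Walk.nil⟩ hyreach
      · intro i hb hnb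
        have hci : c ∈ C i := interior_adj hb hnb hbc
        by_cases hcb : c ∈ vBdry G (C i)
        · have hcW : c ∈ Wset G C := Or.inr (Set.mem_iUnion.mpr ⟨i, hcb⟩)
          exact ⟨c, Or.inr hcb, hcW, (ih c w q hql hw).1 hcW⟩
        · exact (ih c w q hql hw).2 i hci hcb

lemma induce_walk {s : Set V} : ∀ {a b : s} (_ : (G.induce s).Walk a b),
    ∃ q : G.Walk a.1 b.1, ∀ u ∈ q.support, u ∈ s := by
  intro a₀ b₀ w
  induction w with
  | nil => exact ⟨Walk.nil, by rintro u hu; simp at hu; subst hu; exact Subtype.coe_prop _⟩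
  | @cons aa cc _ h q ih =>
    obtain ⟨q', hq'⟩ := ih
    have hadj : G.Adj aa.1 cc.1 := by simpa using h
    refine ⟨Walk.cons hadj q', ?_⟩
    intro u hu
    simp only [Walk.support_cons, List.mem_cons] at hu
    rcases hu with rfl | hu
    · exact aa.2
    · exact hq' u hu

lemma acc_walk {i : Fin n} {x : V} (hx : x ∈ accSet G C i) :
    ∃ (a : V) (_ : a ∈ C i) (q : G.Walk x a), ∀ u ∈ q.support, u = x ∨ u ∈ C i := by
  rcases hx with hx | hx
  · obtain ⟨hxn, u, hu, hadj⟩ := hx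
    refine ⟨u, hu, Walk.cons hadj.symm Walk.nil, ?_⟩
    intro w hw
    simp only [Walk.support_cons, Walk.support_nil, List.mem_cons, List.mem_singleton] at hw
    rcases hw with rfl | rfl | h
    · exact Or.inl rfl
    · exact Or.inr hu
    · simp at h
  · exact ⟨x, hx.1, Walk.nil, by intro u hu; simp at hu; exact Or.inl hu⟩

lemma edge_walk (hreg : ∀ i, IsRegion G (C i)) {x y : V} (hadj : (Gp G C).Adj x y) :
    ∃ q : G.Walk x y, ∀ u ∈ q.support,
      u = x ∨ u = y ∨ ∃ i, u ∈ C i ∧ x ∈ accSet G C i ∧ y ∈ accSet G C i := by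
  obtain ⟨hne, hxW, hyW, h | ⟨i, hxa, hya⟩⟩ := hadj
  · refine ⟨Walk.cons h Walk.nil, ?_⟩
    intro u hu
    simp only [Walk.support_cons, Walk.support_nil, List.mem_cons, List.mem_singleton] at hu
    rcases hu with rfl | rfl | h'
    · exact Or.inl rfl
    · exact Or.inr (Or.inl rfl)
    · simp at h'
  · obtain ⟨a, ha, qx, hqx⟩ := acc_walk hxa
    obtain ⟨b, hb, qy, hqy⟩ := acc_walk hya
    obtain ⟨qm, hqm⟩ := induce_walk (((hreg i).1.preconnected ⟨a, ha⟩ ⟨b, hb⟩).some)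
    refine ⟨qx.append (qm.append qy.reverse), ?_⟩
    intro u hu
    rw [Walk.mem_support_append_iff] at hu
    rcases hu with hu | hu
    · rcases hqx u hu with rfl | hu
      · exact Or.inl rfl
      · exact Or.inr (Or.inr ⟨i, hu, hxa, hya⟩)
    · rw [Walk.mem_support_append_iff] at hu
      rcases hu with hu | hu
      · exact Or.inr (Or.inr ⟨i, hqm u hu, hxa, hya⟩)
      · rw [Walk.support_reverse, List.mem_reverse] at hu
        rcases hqy u hu with rfl | hu
        · exact Or.inr (Or.inl rfl)
        · exact Or.inr (Or.inr ⟨i, hu, hxa, hya⟩)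
end lemmas


theorem stmt10 (G : SimpleGraph V) (hG : LocFin G) (hconn : G.Connected) (k : ℕ)
    (hdeg : ∀ v, k ≤ (G.neighborSet v).ncard)
    (n : ℕ) (C : Fin n → Set V)
    (hreg : ∀ i, IsRegion G (C i))
    (hout : ∀ i, minOutDegGE G (C i) k)
    (hdisj : ∀ i j, i ≠ j → C i ∩ C j = ∅)
    (hends : ∀ f, IsRay G f → ∃ i, HasTailIn f (C i))
    (v : V) (hv : ∀ i, v ∉ C i) :
    ∃ H : G.Subgraph, H.verts.Finite ∧ H.verts.Nonempty ∧
      ∀ w ∈ H.verts, k ≤ (H.neighborSet w).ncard := by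
  classical
  have haccfin : ∀ i, (accSet G C i).Finite := accSet_finite hG hreg
  have hvW : v ∈ Wset G C := Or.inl (by simpa [Set.mem_iUnion] using hv)
  have haccW : ∀ i, accSet G C i ⊆ Wset G C := by
    intro i z hz
    rcases hz with hz | hz
    · obtain ⟨hzn, u, hu, hadj⟩ := hz
      by_cases hzU : ∃ j, z ∈ C j
      · obtain ⟨j, hj⟩ := hzU
        have hne : j ≠ i := fun h => hzn (h ▸ hj)
        have huj : u ∉ C j := by
          intro huj
          have := hdisj i j hne.symm
          exact absurd (Set.mem_inter hu huj) (by rw [this]; exact Set.notMem_empty u)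
        exact Or.inr (Set.mem_iUnion.mpr ⟨j, ⟨hj, u, huj, hadj.symm⟩⟩)
      · push_neg at hzU
        exact Or.inl (by simpa [Set.mem_iUnion] using hzU)
    · exact Or.inr (Set.mem_iUnion.mpr ⟨i, hz⟩)
  -- the key finiteness statement
  have hUc : ((⋃ i, C i)ᶜ : Set V).Finite := by
    by_contra hinfc
    have hinfc' : ((⋃ i, C i)ᶜ : Set V).Infinite := hinfc
    have hWinf : (Wset G C).Infinite := hinfc'.mono Set.subset_union_left
    have hG2fin := Gp_locfin (C := C) hG hreg
    have hRinf : (RSet (Gp G C) ∅ v).Infinite := by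
      refine hWinf.mono ?_
      intro w hw
      have hr : (Gp G C).Reachable v w := by
        obtain ⟨q⟩ := hconn.preconnected v w
        exact (reach_Gp hdisj q.length v w q le_rfl hw).1 hvW
      obtain ⟨q⟩ := hr
      exact ⟨q, fun u _ => Set.notMem_empty u⟩
    obtain ⟨f, hfadj, hfinj⟩ := exists_ray hG2fin hRinf
    have hfW : ∀ m, f m ∈ Wset G C := by
      intro m
      cases m with
      | zero => exact (hfadj 0).2.1
      | succ m => exact (hfadj m).2.2.1
    choose p hp using fun m => edge_walk hreg (hfadj m)
    have hlen : ∀ m, 1 ≤ lenOf p m :=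
      fun m => walk_len_pos (p m) (fun h => (by omega : m ≠ m + 1) (hfinj h))
    have hkey : ∀ nn, gseq f p nn = f (idxOf (lenOf p) nn) ∨
        gseq f p nn = f (idxOf (lenOf p) nn + 1) ∨
        ∃ i, gseq f p nn ∈ C i ∧ f (idxOf (lenOf p) nn) ∈ accSet G C i := by
      intro nn
      rcases hp (idxOf (lenOf p) nn) _ (gseq_mem_support f p nn) with h | h | ⟨i, h1, h2, _⟩
      · exact Or.inl h
      · exact Or.inr (Or.inl h)
      · exact Or.inr (Or.inr ⟨i, h1, h2⟩)
    have haccpre : ∀ i, (f ⁻¹' (accSet G C i)).Finite :=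
      fun i => Set.Finite.preimage hfinj.injOn (haccfin i)
    have hsuccinj : Function.Injective (fun m : ℕ => m + 1) := fun a b h => Nat.succ_injective h
    have hCfin : ∀ i, {nn | gseq f p nn ∈ C i}.Finite := by
      intro i
      have hM : ((f ⁻¹' accSet G C i) ∪
          (fun m => m + 1) ⁻¹' (f ⁻¹' accSet G C i)).Finite :=
        (haccpre i).union (Set.Finite.preimage hsuccinj.injOn (haccpre i))
      refine (idx_fiber_finite hlen hM).subset ?_
      intro nn hg
      have hg : gseq f p nn ∈ C i := hg
      rcases hkey nn with h | h | ⟨j, hj1, hj2⟩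
      · left
        have : f (idxOf (lenOf p) nn) ∈ C i := h ▸ hg
        exact Or.inr (mem_vBdry_of_W hdisj (hfW _) this)
      · right
        have : f (idxOf (lenOf p) nn + 1) ∈ C i := h ▸ hg
        exact Or.inr (mem_vBdry_of_W hdisj (hfW _) this)
      · have hji : j = i := by
          by_contra hne
          have := hdisj j i hne
          exact absurd (Set.mem_inter hj1 hg) (by rw [this]; exact Set.notMem_empty _)
        subst hji
        exact Or.inl hj2
    have hVfin : ∀ u, {m | gseq f p m = u}.Finite := by
      intro u
      by_cases hu : ∃ i, u ∈ C i
      · obtain ⟨i, hi⟩ := hu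
        exact (hCfin i).subset (fun m hm => by rw [Set.mem_setOf_eq] at hm ⊢; rw [hm]; exact hi)
      · push_neg at hu
        have hM : ((f ⁻¹' {u}) ∪ (fun m => m + 1) ⁻¹' (f ⁻¹' {u})).Finite :=
          (Set.Finite.preimage hfinj.injOn (Set.finite_singleton u)).union
            (Set.Finite.preimage hsuccinj.injOn
              (Set.Finite.preimage hfinj.injOn (Set.finite_singleton u)))
        refine (idx_fiber_finite hlen hM).subset ?_
        intro nn hg
        rw [Set.mem_setOf_eq] at hg
        rcases hkey nn with h | h | ⟨j, hj1, _⟩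
        · exact Or.inl (by rw [Set.mem_preimage, ← h, hg]; rfl)
        · exact Or.inr (by rw [Set.mem_preimage, Set.mem_preimage, ← h, hg]; rfl)
        · exact absurd (hg ▸ hj1) (hu j)
    obtain ⟨r, s, hray, hsmono, hrs⟩ := loop_erase (gseq_adj f p hlen) hVfin
    obtain ⟨i, N, hN⟩ := hends r hray
    have hfin2 : {kk | r kk ∈ C i}.Finite := by
      have hsub : {kk | r kk ∈ C i} ⊆ s ⁻¹' {nn | gseq f p nn ∈ C i} := by
        intro kk hk
        rw [Set.mem_setOf_eq, hrs kk] at hk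
        exact hk
      exact ((hCfin i).preimage hsmono.injective.injOn).subset hsub
    exact ((Set.Ici_infinite N).mono (fun kk hk => hN kk hk)) hfin2
  have hWfin : (Wset G C).Finite := hUc.union (Set.finite_iUnion fun i => (hreg i).2)
  refine ⟨⟨Wset G C, fun x y => x ∈ Wset G C ∧ y ∈ Wset G C ∧ G.Adj x y,
      fun h => h.2.2, fun h => h.1, ⟨fun x y h => ⟨h.2.1, h.1, h.2.2.symm⟩⟩⟩,
    hWfin, ⟨v, hvW⟩, ?_⟩
  intro w hw
  have hnbrsub : {z | w ∈ Wset G C ∧ z ∈ Wset G C ∧ G.Adj w z} ⊆ G.neighborSet w :=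
    fun z hz => hz.2.2
  rcases hw with hw | hw
  · -- w outside all regions: full degree
    have heq : {z | w ∈ Wset G C ∧ z ∈ Wset G C ∧ G.Adj w z} = G.neighborSet w := by
      refine Set.Subset.antisymm hnbrsub ?_
      intro z hz
      refine ⟨Or.inl hw, ?_, hz⟩
      by_cases hzU : ∃ j, z ∈ C j
      · obtain ⟨j, hj⟩ := hzU
        have hwj : w ∉ C j := fun hc => hw (Set.mem_iUnion.mpr ⟨j, hc⟩)
        exact Or.inr (Set.mem_iUnion.mpr ⟨j, ⟨hj, w, hwj, (hz : G.Adj w z).symm⟩⟩)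
      · push_neg at hzU
        exact Or.inl (by simpa [Set.mem_iUnion] using hzU)
    show k ≤ (Subgraph.neighborSet _ w).ncard
    have : (Subgraph.neighborSet
        ⟨Wset G C, fun x y => x ∈ Wset G C ∧ y ∈ Wset G C ∧ G.Adj x y,
          fun h => h.2.2, fun h => h.1, ⟨fun x y h => ⟨h.2.1, h.1, h.2.2.symm⟩⟩⟩ w) =
        G.neighborSet w := heq
    rw [this]
    exact hdeg w
  · -- w a boundary vertex
    obtain ⟨i, hwi⟩ := Set.mem_iUnion.mp hw
    have hdeg1 : k ≤ (accSet G C i ∩ G.neighborSet w).ncard := hout i w hwi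
    have hsub2 : accSet G C i ∩ G.neighborSet w ⊆
        {z | w ∈ Wset G C ∧ z ∈ Wset G C ∧ G.Adj w z} := by
      rintro z ⟨hz1, hz2⟩
      exact ⟨Or.inr hw, haccW i hz1, hz2⟩
    refine le_trans hdeg1 (Set.ncard_le_ncard hsub2 ?_)
    exact (hG w).subset hnbrsub
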